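/- Let d ≥ 1 be an integer and let λ : ℤ^d → [0,∞) be summable. Suppose r ∈ (1,∞), ξ ∈ (0,1) and L* ∈ ℕ are such that for every real L' > L* one has ∑_{z ∈ ℤ^d, ‖z‖₁ > rL'} λ(z) ≤ ξ ∑_{z ∈ ℤ^d, ‖z‖₁ > L'} λ(z). Then for every real L with 2L > L* and every x ∈ ℤ^d with ‖x‖₁ ≤ L it holds that ∑_{y ∈ ℤ^d, ‖y‖₁ > L} λ(y − x) ≤ (1−ξ)^{−1} · ∑_{y ∈ ℤ^d, L < ‖y‖₁ ≤ (1+2r)L} λ(y − x). -/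
import Mathlib


open Classical

set_option maxHeartbeats 1000000

/-- If the summable nonnegative `λ : ℤ^d → [0,∞)` satisfies the tail
comparison `∑_{‖z‖₁ > rL'} λ(z) ≤ ξ ∑_{‖z‖₁ > L'} λ(z)` for every `L' > L*`, then
for every `L` with `2L > L*` and every `x` with `‖x‖₁ ≤ L`,
`∑_{‖y‖₁ > L} λ(y−x) ≤ (1−ξ)⁻¹ ∑_{L < ‖y‖₁ ≤ (1+2r)L} λ(y−x)`. -/
theorem stmt_4 (d : ℕ) (hd : 1 ≤ d)
    (lam : (Fin d → ℤ) → ℝ) (hnn : ∀ y, 0 ≤ lam y) (hsum : Summable lam)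
    (r ξ : ℝ) (hr : 1 < r) (hξ0 : 0 < ξ) (hξ1 : ξ < 1) (Lstar : ℕ)
    (htail : ∀ L' : ℝ, (Lstar : ℝ) < L' →
      (∑' z : Fin d → ℤ, if r * L' < ∑ i, |((z i : ℝ))| then lam z else 0)
        ≤ ξ * ∑' z : Fin d → ℤ, if L' < ∑ i, |((z i : ℝ))| then lam z else 0)
    (L : ℝ) (hL : (Lstar : ℝ) < 2 * L) (x : Fin d → ℤ)
    (hx : ∑ i, |((x i : ℝ))| ≤ L) :
    (∑' y : Fin d → ℤ, if L < ∑ i, |((y i : ℝ))| then lam (y - x) else 0)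
      ≤ (1 - ξ)⁻¹ * ∑' y : Fin d → ℤ,
          if L < ∑ i, |((y i : ℝ))| ∧ ∑ i, |((y i : ℝ))| ≤ (1 + 2 * r) * L
          then lam (y - x) else 0 := by
  set N : (Fin d → ℤ) → ℝ := fun y => ∑ i, |((y i : ℝ))| with hN
  have hL0 : 0 < L := by
    have : (0:ℝ) ≤ (Lstar : ℝ) := Nat.cast_nonneg _
    linarith
  have hNnn : ∀ y, 0 ≤ N y := fun y => Finset.sum_nonneg fun i _ => abs_nonneg _
  -- triangle inequalities
  have htri : ∀ y z : Fin d → ℤ, N (y + z) ≤ N y + N z := by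
    intro y z
    rw [hN]
    simp only [Pi.add_apply, Int.cast_add, ← Finset.sum_add_distrib]
    exact Finset.sum_le_sum fun i _ => abs_add_le _ _
  have hg : Summable (fun y => lam (y - x)) := by
    have := (Equiv.subRight x).summable_iff (f := lam)
    exact this.mpr hsum
  have hsumm : ∀ (p : (Fin d → ℤ) → Prop) (inst : ∀ y, Decidable (p y))
      (f : (Fin d → ℤ) → ℝ), Summable f →
      (∀ y, 0 ≤ f y) → Summable (fun y => @ite _ (p y) (inst y) (f y) 0) := by
    intro p inst f hf hfn
    apply hf.of_nonneg_of_le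
    · intro y; split_ifs; exacts [hfn y, le_rfl]
    · intro y; split_ifs; exacts [le_rfl, hfn y]
  set S := ∑' y : Fin d → ℤ, if L < N y then lam (y - x) else 0 with hS
  set A := ∑' y : Fin d → ℤ, if L < N y ∧ N y ≤ (1 + 2*r) * L then lam (y - x) else 0 with hA
  set F := ∑' y : Fin d → ℤ, if (1 + 2*r) * L < N y then lam (y - x) else 0 with hF
  have hneg : ∀ y : Fin d → ℤ, N (-y) = N y := by
    intro y; rw [hN]; simp
  have hSsplit : S = A + F := by
    have h1 : Summable (fun y => if L < N y ∧ N y ≤ (1 + 2*r) * L then lam (y - x) else 0) :=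
      hsumm _ _ _ hg fun y => hnn _
    have h2 : Summable (fun y => if (1 + 2*r) * L < N y then lam (y - x) else 0) :=
      hsumm _ _ _ hg fun y => hnn _
    have e1 : S = ∑' (y : Fin d → ℤ), ((if L < N y ∧ N y ≤ (1 + 2*r) * L then lam (y - x) else 0)
        + (if (1 + 2*r) * L < N y then lam (y - x) else 0)) := by
      rw [hS]
      apply tsum_congr
      intro y
      have hc : L < (1 + 2*r) * L := by nlinarith
      by_cases hy1 : L < N y
      · by_cases hy2 : N y ≤ (1 + 2*r) * L
        · rw [if_pos hy1, if_pos ⟨hy1, hy2⟩, if_neg (by linarith), add_zero]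
        · rw [if_pos hy1, if_neg (fun h => hy2 h.2), if_pos (by linarith), zero_add]
      · rw [if_neg hy1, if_neg (fun h => hy1 h.1), if_neg (by intro h; apply hy1; linarith),
          add_zero]
    rw [e1, hA, hF]
    exact Summable.tsum_add h1 h2
  -- F ≤ tail sum at r*(2L)
  have hF1 : F ≤ ∑' z : Fin d → ℤ, if r * (2*L) < N z then lam z else 0 := by
    have hre : F = ∑' z : Fin d → ℤ, if (1 + 2*r) * L < N (z + x) then lam z else 0 := by
      rw [hF, ← (Equiv.addRight x).tsum_eq
        (f := fun y => if (1 + 2*r) * L < N y then lam (y - x) else 0)]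
      apply tsum_congr
      intro z
      simp [Equiv.coe_addRight]
    rw [hre]
    apply Summable.tsum_le_tsum _ (hsumm _ _ _ hsum hnn) (hsumm _ _ _ hsum hnn)
    intro z
    split_ifs with h1 h2
    · exact le_rfl
    · exfalso
      apply h2
      have := htri z x
      have hxL : N x ≤ L := hx
      nlinarith
    · exact hnn z
    · exact le_rfl
  have hF2 := htail (2*L) hL
  have hF3 : (∑' z : Fin d → ℤ, if 2*L < N z then lam z else 0) ≤ S := by
    have hre : (∑' z : Fin d → ℤ, if 2*L < N z then lam z else 0)
        = ∑' y : Fin d → ℤ, if 2*L < N (y - x) then lam (y - x) else 0 := by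
      rw [← (Equiv.subRight x).tsum_eq (f := fun z => if 2*L < N z then lam z else 0)]
      apply tsum_congr
      intro y
      simp [Equiv.subRight_apply]
    rw [hre, hS]
    apply Summable.tsum_le_tsum _ (hsumm _ _ _ hg (fun y => hnn _)) (hsumm _ _ _ hg (fun y => hnn _))
    intro y
    split_ifs with h1 h2
    · exact le_rfl
    · exfalso
      apply h2
      have := htri y (-x)
      rw [hneg] at this
      have hxL : N x ≤ L := hx
      have hyx : y + -x = y - x := by ring
      rw [hyx] at this
      linarith
    · exact hnn _
    · exact le_rfl
  have hkey : S ≤ A + ξ * S := by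
    calc S = A + F := hSsplit
    _ ≤ A + ξ * (∑' z : Fin d → ℤ, if 2*L < N z then lam z else 0) := by
        have := hF1.trans hF2
        linarith
    _ ≤ A + ξ * S := by nlinarith
  have h1ξ : 0 < 1 - ξ := by linarith
  rw [inv_mul_eq_div, le_div_iff₀ h1ξ]
  linarith
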